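/- arXiv:2506.19516 — 2 statements merged into one kernel-verified Lean document; each statement's English description precedes it below -/
import Mathlib

section
/- Let β ∈ (0,1) and δ ∈ ℝ. Then for every real number z the series Σ_{n=0}^∞ z^n / (Γ(n+1) Γ(δ − βn)) defining the Wright-type function e^{1,δ}_{1,β}(z) converges absolutely; in particular e^{1,δ}_{1,β} is well defined on all of ℝ. -/
open Set Real Filter Topology

private lemma gamma_interp {β x : ℝ} (hβ0 : 0 < β) (hβ1 : β < 1) (hx : 0 < x) :
    Real.Gamma (x + β) ≤ Real.Gamma x * x ^ β := by
  have hx1 : (0:ℝ) < x + 1 := by linarith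
  have h := Real.convexOn_log_Gamma.2 (mem_Ioi.2 hx) (mem_Ioi.2 hx1)
    (by linarith : (0:ℝ) ≤ 1 - β) hβ0.le (by ring)
  simp only [smul_eq_mul, Function.comp_apply] at h
  rw [show (1 - β) * x + β * (x + 1) = x + β by ring] at h
  have hGx : 0 < Real.Gamma x := Real.Gamma_pos_of_pos hx
  have hGxβ : 0 < Real.Gamma (x + β) := Real.Gamma_pos_of_pos (by linarith)
  have h2 : (1 - β) * Real.log (Real.Gamma x) + β * Real.log (Real.Gamma (x + 1))
      = Real.log (Real.Gamma x) + Real.log x * β := by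
    rw [Real.Gamma_add_one hx.ne', Real.log_mul hx.ne' hGx.ne']
    ring
  calc Real.Gamma (x + β) = Real.exp (Real.log (Real.Gamma (x + β))) :=
        (Real.exp_log hGxβ).symm
    _ ≤ Real.exp (Real.log (Real.Gamma x) + Real.log x * β) := by
        rw [← h2]; exact Real.exp_le_exp.2 h
    _ = Real.Gamma x * x ^ β := by
        rw [Real.exp_add, Real.exp_log hGx, Real.rpow_def_of_pos hx]

private lemma refl_bound {s : ℝ} (hs : 0 < 1 - s) :
    |1 / Real.Gamma s| ≤ Real.Gamma (1 - s) / π := by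
  have key := Real.Gamma_mul_Gamma_one_sub s
  have hG : 0 < Real.Gamma (1 - s) := Real.Gamma_pos_of_pos hs
  by_cases hsin : Real.sin (π * s) = 0
  · have : Real.Gamma s * Real.Gamma (1 - s) = 0 := by rw [key, hsin, div_zero]
    rcases mul_eq_zero.1 this with h | h
    · rw [h, div_zero, abs_zero]; positivity
    · exact absurd h hG.ne'
  · have hΓ : Real.Gamma s = π / (Real.sin (π * s) * Real.Gamma (1 - s)) := by
      rw [eq_div_iff hsin] at key
      rw [eq_div_iff (mul_ne_zero hsin hG.ne')]
      linear_combination key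
    rw [hΓ, one_div_div, abs_div, abs_mul, abs_of_pos hG, abs_of_pos Real.pi_pos]
    have h2 : |Real.sin (π * s)| * Real.Gamma (1 - s) ≤ 1 * Real.Gamma (1 - s) :=
      mul_le_mul_of_nonneg_right (abs_le.2 ⟨Real.neg_one_le_sin _, Real.sin_le_one _⟩) hG.le
    calc |Real.sin (π * s)| * Real.Gamma (1 - s) / π ≤ 1 * Real.Gamma (1 - s) / π :=
          div_le_div_of_nonneg_right h2 Real.pi_pos.le
      _ = Real.Gamma (1 - s) / π := by rw [one_mul]


/-- The Wright-type function `e^{1,δ}_{1,β}(z) = ∑ zⁿ / (Γ(n+1) Γ(δ - βn))`.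
(Mathlib's `Real.Gamma` vanishes at the poles `0, -1, -2, …`, so division by it
implements the convention `1/Γ(pole) = 0`.) -/
noncomputable def wrightE (β δ z : ℝ) : ℝ :=
  ∑' n : ℕ, z ^ n / (Real.Gamma ((n : ℝ) + 1) * Real.Gamma (δ - β * n))

/-- For `β ∈ (0,1)` and any `δ, z ∈ ℝ`, the series defining `e^{1,δ}_{1,β}(z)`
converges absolutely; in particular the Wright-type function is well defined on ℝ. -/
theorem wrightE_summable_abs (β δ : ℝ) (hβ : β ∈ Ioo (0 : ℝ) 1) (z : ℝ) :
    Summable (fun n : ℕ => |z ^ n / (Real.Gamma ((n : ℝ) + 1) * Real.Gamma (δ - β * n))|) := by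
  obtain ⟨hβ0, hβ1⟩ := hβ
  set g : ℕ → ℝ := fun n => |z| ^ n * Real.Gamma (1 - δ + β * n) / (n.factorial : ℝ) with hg
  have hβn : Tendsto (fun n : ℕ => β * n) atTop atTop :=
    (tendsto_natCast_atTop_atTop (R := ℝ)).const_mul_atTop hβ0
  have E1 : ∀ᶠ n : ℕ in atTop, δ ≤ β * n := hβn.eventually_ge_atTop δ
  have E2 : ∀ᶠ n : ℕ in atTop, 1 - δ + β * n ≤ n := by
    have h1β : Tendsto (fun n : ℕ => (1 - β) * n) atTop atTop :=
      (tendsto_natCast_atTop_atTop (R := ℝ)).const_mul_atTop (by linarith)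
    filter_upwards [h1β.eventually_ge_atTop (1 - δ)] with n hn
    nlinarith [hn]
  have E3 : ∀ᶠ n : ℕ in atTop, 2 * |z| * (n : ℝ) ^ (β - 1) < 1 := by
    have h' : Tendsto (fun n : ℕ => (n : ℝ) ^ (β - 1)) atTop (𝓝 0) := by
      have := (tendsto_rpow_neg_atTop (y := 1 - β) (by linarith)).comp
        (tendsto_natCast_atTop_atTop (R := ℝ))
      simpa [Function.comp_def, neg_sub] using this
    have h0 : Tendsto (fun n : ℕ => 2 * |z| * (n : ℝ) ^ (β - 1)) atTop (𝓝 0) := by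
      simpa using h'.const_mul (2 * |z|)
    exact h0.eventually (gt_mem_nhds one_pos)
  have hgsum : Summable g := by
    apply summable_of_ratio_norm_eventually_le (r := 1/2) (by norm_num)
    filter_upwards [E1, E2, E3, eventually_ge_atTop 1] with n h1 h2 h3 h4
    have hn0 : (0:ℝ) < n := by exact_mod_cast h4
    set x := 1 - δ + β * n with hxdef
    have hx0 : (0:ℝ) < x := by simp only [hxdef]; linarith
    have hGpos : 0 < Real.Gamma x := Real.Gamma_pos_of_pos hx0
    have hGpos' : 0 < Real.Gamma (x + β) := Real.Gamma_pos_of_pos (by linarith)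
    have hF : (0:ℝ) < n.factorial := by exact_mod_cast n.factorial_pos
    have hxs : 1 - δ + β * ((n+1 : ℕ) : ℝ) = x + β := by push_cast; simp only [hxdef]; ring
    have hgn1eq : g (n+1) = |z| * |z| ^ n * Real.Gamma (x + β) / ((n + 1) * n.factorial) := by
      simp only [hg, hxs, Nat.factorial_succ, pow_succ]
      push_cast
      ring
    have hgneq : g n = |z| ^ n * Real.Gamma x / n.factorial := rfl
    have hAB : Real.Gamma (x + β) ≤ Real.Gamma x * (n : ℝ) ^ β := by
      calc Real.Gamma (x + β) ≤ Real.Gamma x * x ^ β := gamma_interp hβ0 hβ1 hx0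
        _ ≤ Real.Gamma x * (n : ℝ) ^ β :=
            mul_le_mul_of_nonneg_left (Real.rpow_le_rpow hx0.le h2 hβ0.le) hGpos.le
    have hC : 2 * |z| * (n : ℝ) ^ β ≤ (n : ℝ) := by
      have hr : (n : ℝ) ^ β = (n : ℝ) ^ (β - 1) * n := by
        rw [show β = (β - 1) + 1 by ring, Real.rpow_add hn0, Real.rpow_one]
        ring_nf
      calc 2 * |z| * (n : ℝ) ^ β = (2 * |z| * (n : ℝ) ^ (β - 1)) * n := by rw [hr]; ring
        _ ≤ 1 * n := mul_le_mul_of_nonneg_right h3.le hn0.le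
        _ = n := one_mul _
    have key : |z| * Real.Gamma (x + β) * 2 ≤ Real.Gamma x * (n + 1) := by
      calc |z| * Real.Gamma (x + β) * 2 ≤ |z| * (Real.Gamma x * (n : ℝ) ^ β) * 2 := by
            have := mul_le_mul_of_nonneg_left hAB (abs_nonneg z); linarith
        _ = Real.Gamma x * (2 * |z| * (n : ℝ) ^ β) := by ring
        _ ≤ Real.Gamma x * n := mul_le_mul_of_nonneg_left hC hGpos.le
        _ ≤ Real.Gamma x * (n + 1) := by nlinarith [hGpos]
    have hkey2 := mul_le_mul_of_nonneg_left key (pow_nonneg (abs_nonneg z) n)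
    rw [Real.norm_eq_abs, Real.norm_eq_abs, abs_of_nonneg, abs_of_nonneg]
    · rw [hgn1eq, hgneq]
      rw [div_le_iff₀ (by positivity)]
      have expand : 1 / 2 * (|z| ^ n * Real.Gamma x / ↑n.factorial) * ((↑n + 1) * ↑n.factorial)
          = |z| ^ n * (Real.Gamma x * (↑n + 1)) / 2 := by
        field_simp
      rw [expand]
      calc |z| * |z| ^ n * Real.Gamma (x + β)
          = |z| ^ n * (|z| * Real.Gamma (x + β) * 2) / 2 := by ring
        _ ≤ |z| ^ n * (Real.Gamma x * (↑n + 1)) / 2 := by linarith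
    · rw [hgneq]; positivity
    · rw [hgn1eq]; positivity
  refine Summable.of_norm_bounded_eventually_nat hgsum ?_
  filter_upwards [E1] with n h1
  rw [Real.norm_eq_abs, abs_abs]
  have hs : (0:ℝ) < 1 - (δ - β * n) := by linarith
  have hsplit : z ^ n / (Real.Gamma ((n:ℝ) + 1) * Real.Gamma (δ - β * n))
      = z ^ n / Real.Gamma ((n:ℝ) + 1) * (1 / Real.Gamma (δ - β * n)) := by ring
  rw [hsplit, abs_mul]
  have hfac : Real.Gamma ((n:ℝ) + 1) = n.factorial := Real.Gamma_nat_eq_factorial n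
  have hF : (0:ℝ) < n.factorial := by exact_mod_cast n.factorial_pos
  have habs1 : |z ^ n / Real.Gamma ((n:ℝ) + 1)| = |z| ^ n / n.factorial := by
    rw [abs_div, abs_pow, hfac, abs_of_pos hF]
  have hX : 1 - (δ - β * (n:ℝ)) = 1 - δ + β * n := by ring
  have hXpos : 0 < Real.Gamma (1 - δ + β * n) := Real.Gamma_pos_of_pos (by linarith)
  calc |z ^ n / Real.Gamma ((n:ℝ) + 1)| * |1 / Real.Gamma (δ - β * n)|
      ≤ |z ^ n / Real.Gamma ((n:ℝ) + 1)| * (Real.Gamma (1 - (δ - β * n)) / π) :=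
        mul_le_mul_of_nonneg_left (refl_bound hs) (abs_nonneg _)
    _ = |z| ^ n / n.factorial * (Real.Gamma (1 - δ + β * n) / π) := by rw [habs1, hX]
    _ ≤ |z| ^ n / n.factorial * Real.Gamma (1 - δ + β * n) := by
        have hπ : (1:ℝ) ≤ π := by linarith [Real.pi_gt_three]
        have := div_le_self hXpos.le hπ
        exact mul_le_mul_of_nonneg_left this (by positivity)
    _ = g n := by rw [hg]; ring
end

section
/- Let α ∈ (0,1), T > 0, and let C > 0 be a constant such that the Green-function estimate |G(x,t,ξ,τ)| ≤ C (t − τ)^{α/2 − 1} holds for all x ∈ [0,1], ξ ∈ (0,1), 0 < τ < t ≤ T. Define K(x,ξ) = (1/Γ(1−α)) ∫_0^T (T − η)^{−α} G(x,η,ξ,0) dη and assume K is continuous on [0,1] × (0,1) and F : [0,1] → ℝ is continuous. Let g : [0,1] × ℝ → ℝ be continuous and satisfy |g(ξ, v₁) − g(ξ, v₂)| ≤ L |v₁ − v₂| for all ξ ∈ [0,1], v₁, v₂ ∈ ℝ, where L ≥ 0 satisfies C L T^{−α/2} Γ(α/2)/Γ(1 − α/2) < 1. Then there exists a unique continuous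 function v : [0,1] → ℝ such that v(x) = ∫_0^1 K(x,ξ) g(ξ, v(ξ)) dξ + F(x) for all x ∈ [0,1]. -/
open Set

/-- `P(x,t) = (t^{α/2-1}/2) e^{1,α/2}_{1,α/2}(-|x| t^{-α/2})`. -/
noncomputable def Pfun (α x t : ℝ) : ℝ :=
  t ^ (α / 2 - 1) / 2 * wrightE (α / 2) (α / 2) (-(|x| * t ^ (-(α / 2))))

/-- The Green function of the Dirichlet problem on `(0,1)` for the subdiffusion
equation: `G(x,t,ξ,τ) = ∑_{m ∈ ℤ} [P(2m+x-ξ, t-τ) - P(2m+x+ξ, t-τ)]`. -/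
noncomputable def GreenG (α x t ξ τ : ℝ) : ℝ :=
  ∑' m : ℤ, (Pfun α (2 * (m : ℝ) + x - ξ) (t - τ) - Pfun α (2 * (m : ℝ) + x + ξ) (t - τ))

open MeasureTheory

/-- The kernel `K(x,ξ) = (1/Γ(1-α)) ∫₀ᵀ (T-η)^{-α} G(x,η,ξ,0) dη`. -/
noncomputable def Kker (α T x ξ : ℝ) : ℝ :=
  (1 / Real.Gamma (1 - α)) * ∫ η in Ioo (0 : ℝ) T, (T - η) ^ (-α) * GreenG α x η ξ 0

lemma aux_II {α T : ℝ} (hα : α ∈ Set.Ioo (0:ℝ) 1) (hT : 0 < T) :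
    IntervalIntegrable (fun x => x ^ (α/2 - 1) * (T - x) ^ (-α)) volume 0 T := by
  obtain ⟨h0, h1⟩ := hα
  have h2 : (0:ℝ) < T/2 := by linarith
  have A : IntervalIntegrable (fun x => x ^ (α/2 - 1) * (T - x) ^ (-α)) volume 0 (T/2) := by
    apply IntervalIntegrable.mul_continuousOn
    · exact intervalIntegral.intervalIntegrable_rpow' (by linarith)
    · apply ContinuousOn.rpow_const (continuous_const.sub continuous_id).continuousOn
      intro x hx
      rw [Set.uIcc_of_le h2.le] at hx
      left; intro h; simp only [Pi.sub_apply, id, sub_eq_zero] at h; linarith [hx.2]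
  have B : IntervalIntegrable (fun x => x ^ (α/2 - 1) * (T - x) ^ (-α)) volume (T/2) T := by
    have hbase : IntervalIntegrable (fun x => (T - x) ^ (-α)) volume (T/2) T := by
      have := ((intervalIntegral.intervalIntegrable_rpow' (a:=0) (b:=T/2) (r := -α)
        (by linarith)).comp_sub_left T).symm
      rw [show T/2 = T - T/2 by ring]; simpa using this
    have hcont : ContinuousOn (fun x : ℝ => x ^ (α/2-1)) (Set.uIcc (T/2) T) := by
      apply ContinuousOn.rpow_const continuousOn_id
      intro x hx
      rw [Set.uIcc_of_le (by linarith)] at hx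
      left; intro h; simp only [id] at h; rw [h] at hx; linarith [hx.1]
    exact hbase.continuousOn_mul hcont
  exact A.trans B

lemma aux_val {α T : ℝ} (hα : α ∈ Set.Ioo (0:ℝ) 1) (hT : 0 < T) :
    ∫ η in Ioo (0:ℝ) T, η ^ (α/2 - 1) * (T - η) ^ (-α)
      = T ^ (-(α/2)) * (Real.Gamma (α/2) * Real.Gamma (1-α) / Real.Gamma (1 - α/2)) := by
  obtain ⟨h0, h1⟩ := hα
  have hs : (0:ℝ) < α/2 := by linarith
  have ht : (0:ℝ) < 1 - α := by linarith
  have hst : (0:ℝ) < 1 - α/2 := by linarith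
  set s : ℂ := ((α/2 : ℝ) : ℂ) with hs_def
  set t : ℂ := (((1:ℝ) - α : ℝ) : ℂ) with ht_def
  have hscaled := Complex.betaIntegral_scaled s t hT
  have hGamma := Complex.Gamma_mul_Gamma_eq_betaIntegral (s := s) (t := t)
    (by simpa [hs_def] using hs) (by simpa [ht_def] using ht)
  have hstsum : s + t = ((1 - α/2 : ℝ) : ℂ) := by rw [hs_def, ht_def]; push_cast; ring
  have hGst : Complex.Gamma (s + t) = ((Real.Gamma (1 - α/2) : ℝ) : ℂ) := by
    rw [hstsum, Complex.Gamma_ofReal]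
  have hGstne : Complex.Gamma (s + t) ≠ 0 := by
    rw [hGst]
    exact_mod_cast (Real.Gamma_pos_of_pos hst).ne'
  have hbeta : Complex.betaIntegral s t = Complex.Gamma s * Complex.Gamma t / Complex.Gamma (s+t) := by
    rw [hGamma]; exact (mul_div_cancel_left₀ _ hGstne).symm
  have key : (∫ x in (0:ℝ)..T, (x:ℂ) ^ (s-1) * ((T:ℂ) - x) ^ (t-1))
      = ((∫ η in Ioo (0:ℝ) T, η ^ (α/2-1) * (T-η)^(-α) : ℝ) : ℂ) := by
    rw [intervalIntegral.integral_of_le hT.le, MeasureTheory.integral_Ioc_eq_integral_Ioo]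
    have hcg : ∀ x ∈ Ioo (0:ℝ) T, (fun x : ℝ => (x:ℂ) ^ (s-1) * ((T:ℂ) - x) ^ (t-1)) x
        = (fun x : ℝ => ((x ^ (α/2-1) * (T-x)^(-α) : ℝ) : ℂ)) x := by
      intro x hx
      simp only
      rw [Complex.ofReal_mul, Complex.ofReal_cpow hx.1.le,
        Complex.ofReal_cpow (by linarith [hx.2] : (0:ℝ) ≤ T - x)]
      rw [hs_def, ht_def]
      push_cast
      ring_nf
    rw [MeasureTheory.setIntegral_congr_fun measurableSet_Ioo hcg]
    exact integral_ofReal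
  have hTpow : (T:ℂ) ^ (s + t - 1) = ((T ^ (-(α/2)) : ℝ) : ℂ) := by
    rw [Complex.ofReal_cpow hT.le, hstsum]
    push_cast
    ring_nf
  rw [key, hbeta, hTpow, hGst, hs_def, ht_def, Complex.Gamma_ofReal, Complex.Gamma_ofReal] at hscaled
  exact_mod_cast hscaled

noncomputable def extIcc (u : C(Icc (0:ℝ) 1, ℝ)) : ℝ → ℝ :=
  fun ξ => u (projIcc 0 1 zero_le_one ξ)

lemma extIcc_cont (u : C(Icc (0:ℝ) 1, ℝ)) : Continuous (extIcc u) :=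
  u.continuous.comp continuous_projIcc

lemma extIcc_eq (u : C(Icc (0:ℝ) 1, ℝ)) {ξ : ℝ} (hξ : ξ ∈ Icc (0:ℝ) 1) :
    extIcc u ξ = u ⟨ξ, hξ⟩ := by
  simp only [extIcc, projIcc_of_mem zero_le_one hξ]

/-- Banach fixed point for the integral equation: under the Green-function estimate,
continuity of the kernel `K` on `[0,1]×(0,1)` and of `F` on `[0,1]`, a Lipschitz
nonlinearity `g` continuous on `[0,1]×ℝ` with
`C L T^{-α/2} Γ(α/2)/Γ(1-α/2) < 1`, there is a unique continuous `v : [0,1] → ℝ`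
with `v(x) = ∫₀¹ K(x,ξ) g(ξ,v(ξ)) dξ + F(x)`. -/
theorem fixed_point_integral_equation (α T C L : ℝ) (hα : α ∈ Ioo (0 : ℝ) 1)
    (hT : 0 < T) (hC : 0 < C) (hL : 0 ≤ L)
    (hG : ∀ x ∈ Icc (0 : ℝ) 1, ∀ ξ ∈ Ioo (0 : ℝ) 1, ∀ τ t : ℝ, 0 < τ → τ < t → t ≤ T →
      |GreenG α x t ξ τ| ≤ C * (t - τ) ^ (α / 2 - 1))
    (hK : ContinuousOn (fun p : ℝ × ℝ => Kker α T p.1 p.2) (Icc 0 1 ×ˢ Ioo 0 1))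
    (F : ℝ → ℝ) (hF : ContinuousOn F (Icc 0 1))
    (g : ℝ → ℝ → ℝ)
    (hgc : ContinuousOn (fun p : ℝ × ℝ => g p.1 p.2) (Icc 0 1 ×ˢ (univ : Set ℝ)))
    (hg : ∀ ξ ∈ Icc (0 : ℝ) 1, ∀ v₁ v₂ : ℝ, |g ξ v₁ - g ξ v₂| ≤ L * |v₁ - v₂|)
    (hsmall : C * L * T ^ (-(α / 2)) * Real.Gamma (α / 2) / Real.Gamma (1 - α / 2) < 1) :
    ∃ v : ℝ → ℝ,
      (ContinuousOn v (Icc 0 1) ∧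
        ∀ x ∈ Icc (0 : ℝ) 1,
          v x = (∫ ξ in Ioo (0 : ℝ) 1, Kker α T x ξ * g ξ (v ξ)) + F x) ∧
      ∀ w : ℝ → ℝ,
        (ContinuousOn w (Icc 0 1) ∧
          ∀ x ∈ Icc (0 : ℝ) 1,
            w x = (∫ ξ in Ioo (0 : ℝ) 1, Kker α T x ξ * g ξ (w ξ)) + F x) →
        EqOn w v (Icc 0 1) := by
  obtain ⟨hα0, hα1⟩ := hα
  have hΓ1α : 0 < Real.Gamma (1-α) := Real.Gamma_pos_of_pos (by linarith)
  have hΓs : 0 < Real.Gamma (α/2) := Real.Gamma_pos_of_pos (by linarith)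
  have hΓst : 0 < Real.Gamma (1-α/2) := Real.Gamma_pos_of_pos (by linarith)
  -- Green function bound at τ = 0
  have hG0 : ∀ x ∈ Icc (0:ℝ) 1, ∀ ξ ∈ Ioo (0:ℝ) 1, ∀ η ∈ Ioo (0:ℝ) T,
      |GreenG α x η ξ 0| ≤ C * η ^ (α/2 - 1) := by
    intro x hx ξ hξ η hη
    have h1 : GreenG α x η ξ 0 = GreenG α x (η + (T - η)/2) ξ ((T-η)/2) := by
      simp only [GreenG, sub_zero, add_sub_cancel_right]
    rw [h1]
    have := hG x hx ξ hξ ((T-η)/2) (η + (T-η)/2)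
      (by linarith [hη.2]) (by linarith [hη.1]) (by linarith [hη.2])
    simpa using this
  set M : ℝ := C * T ^ (-(α/2)) * Real.Gamma (α/2) / Real.Gamma (1 - α/2) with hM_def
  have hM0 : 0 ≤ M := by positivity
  have hIbeta : IntegrableOn (fun η => η ^ (α/2-1) * (T-η) ^ (-α)) (Ioo 0 T) := by
    rw [← intervalIntegrable_iff_integrableOn_Ioo_of_le hT.le]
    exact aux_II ⟨hα0, hα1⟩ hT
  -- bound on the kernel
  have hKbound : ∀ x ∈ Icc (0:ℝ) 1, ∀ ξ ∈ Ioo (0:ℝ) 1, |Kker α T x ξ| ≤ M := by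
    intro x hx ξ hξ
    have hle : |∫ η in Ioo (0:ℝ) T, (T - η) ^ (-α) * GreenG α x η ξ 0|
        ≤ ∫ η in Ioo (0:ℝ) T, C * (η ^ (α/2-1) * (T-η) ^ (-α)) := by
      rw [← Real.norm_eq_abs]
      refine (norm_integral_le_integral_norm _).trans ?_
      refine integral_mono_of_nonneg (Filter.Eventually.of_forall fun η => norm_nonneg _)
        (hIbeta.const_mul C) ?_
      filter_upwards [ae_restrict_mem measurableSet_Ioo] with η hη
      have hTη : (0:ℝ) ≤ T - η := by linarith [hη.2]
      rw [Real.norm_eq_abs, abs_mul, abs_of_nonneg (Real.rpow_nonneg hTη _)]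
      calc (T-η) ^ (-α) * |GreenG α x η ξ 0|
          ≤ (T-η) ^ (-α) * (C * η ^ (α/2-1)) := by
            exact mul_le_mul_of_nonneg_left (hG0 x hx ξ hξ η hη) (Real.rpow_nonneg hTη _)
        _ = C * (η ^ (α/2-1) * (T-η) ^ (-α)) := by ring
    have hval : ∫ η in Ioo (0:ℝ) T, C * (η ^ (α/2-1) * (T-η) ^ (-α))
        = C * (T ^ (-(α/2)) * (Real.Gamma (α/2) * Real.Gamma (1-α) / Real.Gamma (1 - α/2))) := by
      rw [MeasureTheory.integral_const_mul, aux_val ⟨hα0, hα1⟩ hT]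
    rw [Kker, abs_mul, abs_of_nonneg (by positivity : (0:ℝ) ≤ 1 / Real.Gamma (1-α))]
    calc 1 / Real.Gamma (1-α) * |∫ η in Ioo (0:ℝ) T, (T - η) ^ (-α) * GreenG α x η ξ 0|
        ≤ 1 / Real.Gamma (1-α) *
          (C * (T ^ (-(α/2)) * (Real.Gamma (α/2) * Real.Gamma (1-α) / Real.Gamma (1 - α/2)))) :=
          mul_le_mul_of_nonneg_left (hle.trans_eq hval) (by positivity)
      _ = M := by
          rw [hM_def]
          field_simp [hΓ1α.ne', hΓst.ne']
  -- the contraction mapping setup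
  have hgext : ∀ u : C(Icc (0:ℝ) 1, ℝ), ContinuousOn (fun ξ => g ξ (extIcc u ξ)) (Icc 0 1) := by
    intro u
    have h1 : ContinuousOn (fun ξ : ℝ => (ξ, extIcc u ξ)) (Icc 0 1) :=
      (continuous_id.prodMk (extIcc_cont u)).continuousOn
    simpa [Function.comp_def] using hgc.comp h1 (fun ξ hξ => ⟨hξ, mem_univ _⟩)
  have hKx : ∀ x ∈ Icc (0:ℝ) 1, ContinuousOn (fun ξ => Kker α T x ξ) (Ioo 0 1) := by
    intro x hx
    have h1 : ContinuousOn (fun ξ : ℝ => ((x, ξ) : ℝ × ℝ)) (Ioo 0 1) :=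
      (continuous_const.prodMk continuous_id).continuousOn
    simpa [Function.comp_def] using hK.comp h1 (fun ξ hξ => ⟨hx, hξ⟩)
  have hKξ : ∀ ξ ∈ Ioo (0:ℝ) 1, ContinuousOn (fun x => Kker α T x ξ) (Icc 0 1) := by
    intro ξ hξ
    have h1 : ContinuousOn (fun x : ℝ => ((x, ξ) : ℝ × ℝ)) (Icc 0 1) :=
      (continuous_id.prodMk continuous_const).continuousOn
    simpa [Function.comp_def] using hK.comp h1 (fun x hx => ⟨hx, hξ⟩)
  have hmes : ∀ u : C(Icc (0:ℝ) 1, ℝ), ∀ x ∈ Icc (0:ℝ) 1,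
      AEStronglyMeasurable (fun ξ => Kker α T x ξ * g ξ (extIcc u ξ))
        (volume.restrict (Ioo (0:ℝ) 1)) := fun u x hx =>
    ((hKx x hx).mul ((hgext u).mono Ioo_subset_Icc_self)).aestronglyMeasurable measurableSet_Ioo
  have hbd : ∀ u : C(Icc (0:ℝ) 1, ℝ), ∃ B : ℝ, ∀ ξ ∈ Icc (0:ℝ) 1, |g ξ (extIcc u ξ)| ≤ B := by
    intro u
    obtain ⟨B, hB⟩ := isCompact_Icc.exists_bound_of_continuousOn (hgext u)
    exact ⟨B, fun ξ hξ => by simpa using hB ξ hξ⟩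
  have hInt : ∀ u : C(Icc (0:ℝ) 1, ℝ), ∀ x ∈ Icc (0:ℝ) 1,
      IntegrableOn (fun ξ => Kker α T x ξ * g ξ (extIcc u ξ)) (Ioo (0:ℝ) 1) := by
    intro u x hx
    obtain ⟨B, hB⟩ := hbd u
    refine Integrable.mono' (g := fun _ => M * B)
      ((integrableOn_const_iff).mpr (Or.inr measure_Ioo_lt_top)) (hmes u x hx) ?_
    filter_upwards [ae_restrict_mem measurableSet_Ioo] with ξ hξ
    rw [Real.norm_eq_abs, abs_mul]
    have hξ' : ξ ∈ Icc (0:ℝ) 1 := Ioo_subset_Icc_self hξ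
    exact mul_le_mul (hKbound x hx ξ hξ) (hB ξ hξ') (abs_nonneg _) hM0
  -- continuity of the integral operator
  have hJcont : ∀ u : C(Icc (0:ℝ) 1, ℝ),
      ContinuousOn (fun x => ∫ ξ in Ioo (0:ℝ) 1, Kker α T x ξ * g ξ (extIcc u ξ)) (Icc 0 1) := by
    intro u
    obtain ⟨B, hB⟩ := hbd u
    apply MeasureTheory.continuousOn_of_dominated (bound := fun _ => M * B)
    · exact fun x hx => hmes u x hx
    · intro x hx
      filter_upwards [ae_restrict_mem measurableSet_Ioo] with ξ hξ
      rw [Real.norm_eq_abs, abs_mul]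
      exact mul_le_mul (hKbound x hx ξ hξ) (hB ξ (Ioo_subset_Icc_self hξ)) (abs_nonneg _) hM0
    · exact (integrableOn_const_iff).mpr (Or.inr measure_Ioo_lt_top)
    · filter_upwards [ae_restrict_mem measurableSet_Ioo] with ξ hξ
      exact (hKξ ξ hξ).mul continuousOn_const
  set Φ : C(Icc (0:ℝ) 1, ℝ) → C(Icc (0:ℝ) 1, ℝ) := fun u =>
    ⟨(Icc (0:ℝ) 1).restrict (fun x => (∫ ξ in Ioo (0:ℝ) 1, Kker α T x ξ * g ξ (extIcc u ξ)) + F x),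
      ((hJcont u).add hF).restrict⟩ with hΦ_def
  have hΦ_apply : ∀ u (p : Icc (0:ℝ) 1),
      Φ u p = (∫ ξ in Ioo (0:ℝ) 1, Kker α T (p:ℝ) ξ * g ξ (extIcc u ξ)) + F p :=
    fun u p => rfl
  -- contraction estimate
  have hdist : ∀ u w : C(Icc (0:ℝ) 1, ℝ), dist (Φ u) (Φ w) ≤ L * M * dist u w := by
    intro u w
    rw [ContinuousMap.dist_le (mul_nonneg (mul_nonneg hL hM0) dist_nonneg)]
    intro p
    rw [hΦ_apply u p, hΦ_apply w p, Real.dist_eq, add_sub_add_right_eq_sub,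
      ← MeasureTheory.integral_sub (hInt u p p.2) (hInt w p p.2)]
    have hstep : |∫ ξ in Ioo (0:ℝ) 1,
        (Kker α T (p:ℝ) ξ * g ξ (extIcc u ξ) - Kker α T (p:ℝ) ξ * g ξ (extIcc w ξ))|
        ≤ ∫ _ξ in Ioo (0:ℝ) 1, L * M * dist u w := by
      rw [← Real.norm_eq_abs]
      refine (norm_integral_le_integral_norm _).trans ?_
      refine integral_mono_of_nonneg (Filter.Eventually.of_forall fun ξ => norm_nonneg _)
        ((integrableOn_const_iff).mpr (Or.inr measure_Ioo_lt_top)) ?_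
      filter_upwards [ae_restrict_mem measurableSet_Ioo] with ξ hξ
      have hξ' : ξ ∈ Icc (0:ℝ) 1 := Ioo_subset_Icc_self hξ
      rw [Real.norm_eq_abs, ← mul_sub, abs_mul]
      have h1 : |g ξ (extIcc u ξ) - g ξ (extIcc w ξ)| ≤ L * dist u w := by
        refine (hg ξ hξ' _ _).trans ?_
        refine mul_le_mul_of_nonneg_left ?_ hL
        rw [extIcc_eq u hξ', extIcc_eq w hξ', ← Real.dist_eq]
        exact ContinuousMap.dist_apply_le_dist _
      calc |Kker α T (p:ℝ) ξ| * |g ξ (extIcc u ξ) - g ξ (extIcc w ξ)|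
          ≤ M * (L * dist u w) :=
            mul_le_mul (hKbound p p.2 ξ hξ) h1 (abs_nonneg _) hM0
        _ = L * M * dist u w := by ring
    refine hstep.trans ?_
    rw [MeasureTheory.setIntegral_const, Real.volume_real_Ioo]
    simp
  have hLM0 : 0 ≤ L * M := mul_nonneg hL hM0
  have hcontr : ContractingWith (L * M).toNNReal Φ := by
    constructor
    · rw [← NNReal.coe_lt_coe, Real.coe_toNNReal _ hLM0, NNReal.coe_one]
      calc L * M = C * L * T ^ (-(α/2)) * Real.Gamma (α/2) / Real.Gamma (1 - α/2) := by
            rw [hM_def]; ring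
        _ < 1 := hsmall
    · apply LipschitzWith.of_dist_le_mul
      intro u w
      rw [Real.coe_toNNReal _ hLM0]
      exact hdist u w
  haveI : Nonempty C(Icc (0:ℝ) 1, ℝ) := ⟨ContinuousMap.const _ 0⟩
  set vfix := ContractingWith.fixedPoint Φ hcontr with hvfix_def
  have hfix : Φ vfix = vfix := hcontr.fixedPoint_isFixedPt
  refine ⟨extIcc vfix, ⟨(extIcc_cont vfix).continuousOn, ?_⟩, ?_⟩
  · intro x hx
    have h1 := ContinuousMap.congr_fun hfix ⟨x, hx⟩
    rw [hΦ_apply vfix ⟨x, hx⟩] at h1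
    rw [extIcc_eq vfix hx]
    exact h1.symm
  · rintro w ⟨hwc, hweq⟩
    set wc : C(Icc (0:ℝ) 1, ℝ) := ⟨(Icc (0:ℝ) 1).restrict w, hwc.restrict⟩ with hwc_def
    have hwfix : Function.IsFixedPt Φ wc := by
      show Φ wc = wc
      ext p
      rw [hΦ_apply wc p]
      have hi : ∫ ξ in Ioo (0:ℝ) 1, Kker α T (p:ℝ) ξ * g ξ (extIcc wc ξ)
          = ∫ ξ in Ioo (0:ℝ) 1, Kker α T (p:ℝ) ξ * g ξ (w ξ) := by
        apply MeasureTheory.setIntegral_congr_fun measurableSet_Ioo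
        intro ξ hξ
        have hξ' : ξ ∈ Icc (0:ℝ) 1 := Ioo_subset_Icc_self hξ
        simp only
        rw [extIcc_eq wc hξ']
        rfl
      rw [hi]
      exact (hweq p p.2).symm
    have huniq : wc = vfix := hcontr.fixedPoint_unique hwfix
    intro x hx
    calc w x = wc ⟨x, hx⟩ := rfl
      _ = vfix ⟨x, hx⟩ := by rw [huniq]
      _ = extIcc vfix x := (extIcc_eq vfix hx).symm
end
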